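/- Let B be a real Banach space and ξ : ℕ → B a Schauder basis of B, with coefficient functionals cᵢ. Assume: (A1) for every x ∈ B and every n ∈ ℕ, ‖∑_{i<n} cᵢ(x) • ξ(i)‖ ≤ ‖x‖; (A2) for every sequence of scalars d : ℕ → ℝ and every b > 0, if ‖∑_{i<n} d(i) • ξ(i)‖ ≤ b for all n ∈ ℕ, then the partial sums ∑_{i<n} d(i) • ξ(i) converge in norm to some x ∈ B with ‖x‖ ≤ b; (A3) for every continuous linear functional f on B, ‖f − ∑_{i<n} f(ξ(i)) • cᵢ(·)‖ → 0 in the dual norm as n → ∞. Then the closed unit ball {x ∈ B : ‖x‖ ≤ 1} is compact in the weak topology of B (the topology induced by the continuous dual B*). -/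

import Mathlib

open Filter Topology

/-- Under the same assumptions (A1)–(A3) as Rabin's theorem, the closed
unit ball of `B` is compact in the weak topology of `B`. -/
theorem schauder_basis_unit_ball_weakly_compact
    {B : Type*} [NormedAddCommGroup B] [NormedSpace ℝ B] [CompleteSpace B]
    (ξ : ℕ → B) (c : B → ℕ → ℝ)
    (hconv : ∀ x : B,
      Tendsto (fun n => ∑ i ∈ Finset.range n, c x i • ξ i) atTop (𝓝 x))
    (huniq : ∀ (x : B) (d : ℕ → ℝ),
      Tendsto (fun n => ∑ i ∈ Finset.range n, d i • ξ i) atTop (𝓝 x) → d = c x)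
    (φ : ℕ → B →L[ℝ] ℝ) (hφ : ∀ (i : ℕ) (x : B), φ i x = c x i)
    (A1 : ∀ (x : B) (n : ℕ), ‖∑ i ∈ Finset.range n, c x i • ξ i‖ ≤ ‖x‖)
    (A2 : ∀ (d : ℕ → ℝ) (b : ℝ), 0 < b →
      (∀ n : ℕ, ‖∑ i ∈ Finset.range n, d i • ξ i‖ ≤ b) →
      ∃ x : B, Tendsto (fun n => ∑ i ∈ Finset.range n, d i • ξ i) atTop (𝓝 x) ∧ ‖x‖ ≤ b)
    (A3 : ∀ f : B →L[ℝ] ℝ,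
      Tendsto (fun n => ‖f - ∑ i ∈ Finset.range n, f (ξ i) • φ i‖) atTop (𝓝 0)) :
    IsCompact (toWeakSpace ℝ B '' Metric.closedBall (0 : B) 1) := by
  rw [isCompact_iff_ultrafilter_le_nhds]
  intro 𝒰 h𝒰
  set e := toWeakSpace ℝ B with he
  -- pull the ultrafilter back to `B`
  let V : Ultrafilter B := 𝒰.map e.symm
  have hVball : Metric.closedBall (0 : B) 1 ∈ V := by
    have : e '' Metric.closedBall (0 : B) 1 ⊆ e.symm ⁻¹' Metric.closedBall (0 : B) 1 := by
      rintro w ⟨x, hx, rfl⟩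
      simpa using hx
    exact Filter.mem_of_superset (le_principal_iff.mp h𝒰) this
  have hnorm : ∀ᶠ x in (V : Filter B), ‖x‖ ≤ 1 := by
    filter_upwards [hVball] with x hx
    simpa using hx
  -- limits of coefficients along `V`
  have hd : ∀ i : ℕ, ∃ r : ℝ, Tendsto (fun x => c x i) V (𝓝 r) := by
    intro i
    have hmem : Set.Icc (-‖φ i‖) ‖φ i‖ ∈ (V.map fun x => c x i) := by
      rw [Ultrafilter.mem_map]
      refine Filter.mem_of_superset hVball ?_
      intro x hx
      have hx1 : ‖x‖ ≤ 1 := by simpa using hx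
      have := (φ i).le_opNorm x
      have habs : |c x i| ≤ ‖φ i‖ := by
        rw [← hφ i x]
        calc |φ i x| = ‖φ i x‖ := rfl
          _ ≤ ‖φ i‖ * ‖x‖ := (φ i).le_opNorm x
          _ ≤ ‖φ i‖ * 1 := by
              exact mul_le_mul_of_nonneg_left hx1 (norm_nonneg _)
          _ = ‖φ i‖ := mul_one _
      exact abs_le.mp habs
    obtain ⟨r, _, hr⟩ :=
      isCompact_Icc.ultrafilter_le_nhds (V.map fun x => c x i) (le_principal_iff.mpr hmem)
    exact ⟨r, hr⟩
  choose d hdlim using hd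
  -- partial sums for `d`
  have hpsum : ∀ n : ℕ, Tendsto (fun x => ∑ i ∈ Finset.range n, c x i • ξ i) V
      (𝓝 (∑ i ∈ Finset.range n, d i • ξ i)) := by
    intro n
    exact tendsto_finset_sum _ fun i _ => (hdlim i).smul_const (ξ i)
  have hbound : ∀ n : ℕ, ‖∑ i ∈ Finset.range n, d i • ξ i‖ ≤ 1 := by
    intro n
    refine le_of_tendsto (hpsum n).norm ?_
    filter_upwards [hnorm] with x hx
    exact (A1 x n).trans hx
  obtain ⟨x₀, hx₀t, hx₀n⟩ := A2 d 1 one_pos hbound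
  have hdc : d = c x₀ := huniq x₀ d hx₀t
  -- coefficients converge to coefficients of x₀
  have hdlim' : ∀ i, Tendsto (fun x => c x i) V (𝓝 (c x₀ i)) := by
    intro i; have := hdlim i; rwa [hdc] at this
  -- weak convergence of `V` to `x₀`
  have hweak : ∀ f : B →L[ℝ] ℝ, Tendsto (fun x => f x) V (𝓝 (f x₀)) := by
    intro f
    rw [Metric.tendsto_nhds]
    intro ε hε
    have hε3 : 0 < ε / 3 := by linarith
    obtain ⟨n, hn⟩ : ∃ n, ‖f - ∑ i ∈ Finset.range n, f (ξ i) • φ i‖ < ε / 3 := by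
      have := (A3 f).eventually (eventually_lt_nhds hε3)
      exact this.exists
    set g : B →L[ℝ] ℝ := ∑ i ∈ Finset.range n, f (ξ i) • φ i with hg
    have hgapp : ∀ x : B, g x = ∑ i ∈ Finset.range n, f (ξ i) * c x i := by
      intro x
      simp [hg, ContinuousLinearMap.sum_apply, hφ, smul_eq_mul]
    have hgt : Tendsto (fun x => g x) V (𝓝 (g x₀)) := by
      simp only [hgapp]
      exact tendsto_finset_sum _ fun i _ => (hdlim' i).const_mul _
    have hmid : ∀ᶠ x in (V : Filter B), |g x - g x₀| < ε / 3 := by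
      have := Metric.tendsto_nhds.mp hgt (ε / 3) hε3
      filter_upwards [this] with x hx
      rwa [Real.dist_eq] at hx
    filter_upwards [hnorm, hmid] with x hx hmidx
    have h1 : |f x - g x| < ε / 3 := by
      have : |(f - g) x| ≤ ‖f - g‖ * ‖x‖ := (f - g).le_opNorm x
      have h' : ‖f - g‖ * ‖x‖ ≤ ‖f - g‖ := by
        calc ‖f - g‖ * ‖x‖ ≤ ‖f - g‖ * 1 :=
              mul_le_mul_of_nonneg_left hx (norm_nonneg _)
          _ = ‖f - g‖ := mul_one _
      simp only [ContinuousLinearMap.sub_apply] at this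
      exact lt_of_le_of_lt (this.trans h') hn
    have h3 : |g x₀ - f x₀| < ε / 3 := by
      have : |(f - g) x₀| ≤ ‖f - g‖ * ‖x₀‖ := (f - g).le_opNorm x₀
      have h' : ‖f - g‖ * ‖x₀‖ ≤ ‖f - g‖ := by
        calc ‖f - g‖ * ‖x₀‖ ≤ ‖f - g‖ * 1 :=
              mul_le_mul_of_nonneg_left hx₀n (norm_nonneg _)
          _ = ‖f - g‖ := mul_one _
      simp only [ContinuousLinearMap.sub_apply] at this
      have := lt_of_le_of_lt (this.trans h') hn
      rwa [abs_sub_comm]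
    have : dist (f x) (f x₀) = |f x - f x₀| := rfl
    rw [this]
    calc |f x - f x₀| ≤ |f x - g x| + |g x - g x₀| + |g x₀ - f x₀| := by
          have := abs_sub_le (f x) (g x) (f x₀)
          have h2 := abs_sub_le (g x) (g x₀) (f x₀)
          linarith [abs_sub_le (f x) (g x) (f x₀), abs_sub_le (g x) (g x₀) (f x₀)]
      _ < ε / 3 + ε / 3 + ε / 3 := by linarith
      _ = ε := by ring
  -- conclude
  refine ⟨e x₀, ⟨x₀, by simpa using hx₀n, rfl⟩, ?_⟩
  have hinj : Function.Injective ((topDualPairing ℝ B).flip) := by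
    intro x y hxy
    refine (NormedSpace.eq_iff_forall_dual_eq ℝ).mpr fun gf => ?_
    have := LinearMap.congr_fun hxy gf
    simpa [topDualPairing_apply] using this
  have htend : Tendsto (fun x : B => (e x : WeakSpace ℝ B)) V (𝓝 (e x₀)) := by
    refine (WeakBilin.tendsto_iff_forall_eval_tendsto (B := (topDualPairing ℝ B).flip) hinj
      (f := fun x : B => (e x : WeakBilin (topDualPairing ℝ B).flip)) (x := e x₀)).mpr ?_
    intro f
    exact hweak f
  have h𝒰eq : (𝒰 : Filter (WeakSpace ℝ B)) = Filter.map (fun x : B => (e x : WeakSpace ℝ B)) V := by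
    have hVc : (V : Filter B) = Filter.map e.symm (𝒰 : Filter (WeakSpace ℝ B)) :=
      Ultrafilter.coe_map e.symm 𝒰
    rw [hVc, Filter.map_map]
    have : ((fun x : B => (e x : WeakSpace ℝ B)) ∘ e.symm) = id := by
      funext w; simp
    rw [this, Filter.map_id]
  rw [h𝒰eq]
  exact htend
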